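/- arXiv:2010.02282 — 2 statements merged into one kernel-verified Lean document; each statement's English description precedes it below -/
import Mathlib

section
/- With the update z^{k+1} = [z^k + β_k g(x^{k+1})]_+, it holds for each i that |z_i^{k+1} g_i(x^{k+1})| ≤ (1/β_k)((z_i^{k+1})² + (z_i^k)²/8), and hence Σ_{i=1}^m |z_i^{k+1} g_i(x^{k+1})| ≤ (1/β_k)(‖z^{k+1}‖² + ‖z^k‖²/8). -/
/-- complementarity bound from the augmented Lagrangian multiplier update. -/
theorem stmt_4 {m : ℕ} (z gx : EuclideanSpace ℝ (Fin m)) (β : ℝ) (hβ : 0 < β)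
    (hz : ∀ i, 0 ≤ z i)
    (z' : EuclideanSpace ℝ (Fin m)) (hz' : ∀ i, z' i = max (z i + β * gx i) 0) :
    (∀ i, |z' i * gx i| ≤ 1 / β * ((z' i) ^ 2 + (z i) ^ 2 / 8)) ∧
      ∑ i, |z' i * gx i| ≤ 1 / β * (‖z'‖ ^ 2 + ‖z‖ ^ 2 / 8) := by
  have h1 : ∀ i, |z' i * gx i| ≤ 1 / β * ((z' i) ^ 2 + (z i) ^ 2 / 8) := by
    intro i
    rcases le_or_gt (z i + β * gx i) 0 with h | h
    · have : z' i = 0 := by rw [hz' i, max_eq_right h]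
      rw [this]
      simp only [zero_mul, abs_zero, zero_pow]
      positivity
    · have hzi : z' i = z i + β * gx i := by rw [hz' i, max_eq_left h.le]
      have hzpos : 0 < z' i := by rw [hzi]; exact h
      have hg : gx i = (z' i - z i) / β := by
        rw [hzi]; field_simp; ring
      rw [hg]
      have key : |z' i * (z' i - z i)| ≤ (z' i) ^ 2 + (z i) ^ 2 / 8 := by
        rw [abs_le]
        constructor <;> nlinarith [sq_nonneg (z' i - z i), sq_nonneg (4 * z' i - z i),
          hz i, hzpos.le]
      have : |z' i * ((z' i - z i) / β)| = |z' i * (z' i - z i)| / β := by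
        rw [← mul_div_assoc, abs_div, abs_of_pos hβ]
      rw [this, one_div, inv_mul_eq_div]
      gcongr
  refine ⟨h1, ?_⟩
  have hn1 : ‖z'‖ ^ 2 = ∑ i, (z' i) ^ 2 := by
    rw [EuclideanSpace.norm_eq, Real.sq_sqrt (by positivity)]
    simp [sq_abs]
  have hn2 : ‖z‖ ^ 2 = ∑ i, (z i) ^ 2 := by
    rw [EuclideanSpace.norm_eq, Real.sq_sqrt (by positivity)]
    simp [sq_abs]
  calc ∑ i, |z' i * gx i| ≤ ∑ i, 1 / β * ((z' i) ^ 2 + (z i) ^ 2 / 8) :=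
        Finset.sum_le_sum fun i _ => h1 i
    _ = 1 / β * (‖z'‖ ^ 2 + ‖z‖ ^ 2 / 8) := by
        rw [hn1, hn2, ← Finset.mul_sum, Finset.sum_add_distrib, ← Finset.sum_div]
end

section
/- Let x̄ be the minimizer of φ(x) = F(x) + (β/2)‖[g(x) + z/β]_+‖², where F is convex, g_i convex, z ≥ 0, β > 0, and suppose (x*, z*) is a KKT pair for min{F(x) : g(x) ≤ 0}. Then ‖[g(x̄) + z/β]_+‖ ≤ (2‖z*‖ + ‖z‖)/β. -/
lemma grad_ineq {n : ℕ} {f : EuclideanSpace ℝ (Fin n) → ℝ}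
    (hf : ConvexOn ℝ Set.univ f) {v x : EuclideanSpace ℝ (Fin n)}
    (hd : HasGradientAt f v x) (y : EuclideanSpace ℝ (Fin n)) :
    f x + (inner ℝ v (y - x) : ℝ) ≤ f y := by
  set c : ℝ →ᵃ[ℝ] EuclideanSpace ℝ (Fin n) := AffineMap.lineMap x y with hc
  have hconv : ConvexOn ℝ (c ⁻¹' Set.univ) (f ∘ c) := hf.comp_affineMap c
  have hc0 : c 0 = x := AffineMap.lineMap_apply_zero x y
  have hc1 : c 1 = y := AffineMap.lineMap_apply_one x y
  have hcd : HasDerivAt c (y - x) 0 := by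
    have h1 : HasDerivAt (fun t : ℝ => x + t • (y - x)) (y - x) 0 := by
      simpa using ((hasDerivAt_id (0:ℝ)).smul_const (y - x)).const_add x
    have : (fun t : ℝ => x + t • (y - x)) = fun t => c t := by
      funext t
      simp [hc, AffineMap.lineMap_apply, vsub_eq_sub, vadd_eq_add, add_comm]
    rwa [this] at h1
  have hfd : HasDerivAt (f ∘ c) (inner ℝ v (y - x) : ℝ) 0 := by
    have := (hc0 ▸ hd.hasFDerivAt : HasFDerivAt f _ (c 0)).comp_hasDerivAt 0 hcd
    simpa using this
  have hs := hconv.le_slope_of_hasDerivAt (by simp) (by simp) (by norm_num : (0:ℝ) < 1) hfd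
  have : slope (f ∘ c) 0 1 = f y - f x := by
    simp [slope, hc0, hc1]
  rw [this] at hs
  linarith

lemma norm_sq_euclidean {m : ℕ} (w : EuclideanSpace ℝ (Fin m)) :
    ‖w‖ ^ 2 = ∑ i, (w i) ^ 2 := by
  rw [EuclideanSpace.norm_eq, Real.sq_sqrt (by positivity)]
  exact Finset.sum_congr rfl fun i _ => by rw [Real.norm_eq_abs, sq_abs]



/-- Convex subdifferential of a real-valued function. -/
def subdiff {n : ℕ} (f : EuclideanSpace ℝ (Fin n) → ℝ) (x : EuclideanSpace ℝ (Fin n)) :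
    Set (EuclideanSpace ℝ (Fin n)) :=
  {v | ∀ y, f x + (inner ℝ v (y - x) : ℝ) ≤ f y}

/-- bound on the residual `‖[g(x̄)+z/β]_+‖` at the AL minimizer. -/
theorem stmt_6 {n m : ℕ} (F : EuclideanSpace ℝ (Fin n) → ℝ)
    (g : Fin m → EuclideanSpace ℝ (Fin n) → ℝ)
    (gradg : Fin m → EuclideanSpace ℝ (Fin n) → EuclideanSpace ℝ (Fin n))
    (hF : ConvexOn ℝ Set.univ F)
    (hg : ∀ i, ConvexOn ℝ Set.univ (g i))
    (hgd : ∀ i x, HasGradientAt (g i) (gradg i x) x)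
    (z : EuclideanSpace ℝ (Fin m)) (hz : ∀ i, 0 ≤ z i) (β : ℝ) (hβ : 0 < β)
    (θp : EuclideanSpace ℝ (Fin n) → EuclideanSpace ℝ (Fin m))
    (hθp : ∀ x i, θp x i = max (g i x + z i / β) 0)
    (φ : EuclideanSpace ℝ (Fin n) → ℝ)
    (hφ : ∀ x, φ x = F x + β / 2 * ‖θp x‖ ^ 2)
    (xbar : EuclideanSpace ℝ (Fin n)) (hxbar : ∀ x, φ xbar ≤ φ x)
    (xstar : EuclideanSpace ℝ (Fin n)) (zstar : EuclideanSpace ℝ (Fin m))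
    (hstat : ∃ v ∈ subdiff F xstar, v + ∑ i, zstar i • gradg i xstar = 0)
    (hzspos : ∀ i, 0 ≤ zstar i)
    (hfeas : ∀ i, g i xstar ≤ 0)
    (hcomp : ∑ i, zstar i * g i xstar = 0) :
    ‖θp xbar‖ ≤ (2 * ‖zstar‖ + ‖z‖) / β := by
  obtain ⟨v, hv, hveq⟩ := hstat
  set t := ‖θp xbar‖ with ht
  set a := ‖zstar‖ with ha
  set b := ‖z‖ with hb
  have ht0 : 0 ≤ t := norm_nonneg _
  have ha0 : 0 ≤ a := norm_nonneg _
  have hb0 : 0 ≤ b := norm_nonneg _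
  -- ‖θp xstar‖² ≤ (b/β)²
  have h2 : ‖θp xstar‖ ^ 2 ≤ b ^ 2 / β ^ 2 := by
    rw [norm_sq_euclidean]
    have : ∀ i ∈ Finset.univ, (θp xstar i) ^ 2 ≤ (z i / β) ^ 2 := by
      intro i _
      rw [hθp]
      have h1 : max (g i xstar + z i / β) 0 ≤ z i / β := by
        apply max_le
        · have := hfeas i; linarith
        · exact div_nonneg (hz i) hβ.le
      have h2 : (0:ℝ) ≤ max (g i xstar + z i / β) 0 := le_max_right _ _
      nlinarith
    calc ∑ i, (θp xstar i) ^ 2 ≤ ∑ i, (z i / β) ^ 2 := Finset.sum_le_sum this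
      _ = (∑ i, (z i) ^ 2) / β ^ 2 := by
          rw [Finset.sum_div]; exact Finset.sum_congr rfl fun i _ => by ring
      _ = b ^ 2 / β ^ 2 := by rw [hb, norm_sq_euclidean z]
  -- KKT: F xstar - ∑ zstar i * g i xbar ≤ F xbar
  have h3 : F xstar - ∑ i, zstar i * g i xbar ≤ F xbar := by
    have hsub := hv xbar
    have hinner : (inner ℝ v (xbar - xstar) : ℝ)
        = - ∑ i, zstar i * (inner ℝ (gradg i xstar) (xbar - xstar) : ℝ) := by
      have hv' : v = - ∑ i, zstar i • gradg i xstar := by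
        have := hveq; linear_combination (norm := module) this
      rw [hv', inner_neg_left, sum_inner]
      congr 1
      exact Finset.sum_congr rfl fun i _ => real_inner_smul_left _ _ _
    have hgi : ∀ i, zstar i * (inner ℝ (gradg i xstar) (xbar - xstar) : ℝ)
        ≤ zstar i * (g i xbar - g i xstar) := by
      intro i
      have := grad_ineq (hg i) (hgd i xstar) xbar
      exact mul_le_mul_of_nonneg_left (by linarith) (hzspos i)
    have hsum : ∑ i, zstar i * (inner ℝ (gradg i xstar) (xbar - xstar) : ℝ)
        ≤ ∑ i, zstar i * (g i xbar - g i xstar) :=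
      Finset.sum_le_sum fun i _ => hgi i
    have hexp : ∑ i, zstar i * (g i xbar - g i xstar)
        = ∑ i, zstar i * g i xbar - ∑ i, zstar i * g i xstar := by
      rw [← Finset.sum_sub_distrib]
      exact Finset.sum_congr rfl fun i _ => by ring
    rw [hinner] at hsub
    rw [hexp, hcomp] at hsum
    linarith
  -- ∑ zstar i * g i xbar ≤ a * t
  have h4 : ∑ i, zstar i * g i xbar ≤ a * t := by
    have step1 : ∑ i, zstar i * g i xbar ≤ ∑ i, zstar i * θp xbar i := by
      apply Finset.sum_le_sum
      intro i _
      apply mul_le_mul_of_nonneg_left _ (hzspos i)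
      rw [hθp]
      have : 0 ≤ z i / β := div_nonneg (hz i) hβ.le
      calc g i xbar ≤ g i xbar + z i / β := by linarith
        _ ≤ max (g i xbar + z i / β) 0 := le_max_left _ _
    have step2 : ∑ i, zstar i * θp xbar i = (inner ℝ zstar (θp xbar) : ℝ) := by
      simp [PiLp.inner_apply, RCLike.inner_apply, conj_trivial, mul_comm]
    have step3 : (inner ℝ zstar (θp xbar) : ℝ) ≤ a * t := real_inner_le_norm _ _
    linarith [step1, step2 ▸ step3]
  -- combine
  have hmin := hxbar xstar
  rw [hφ, hφ] at hmin
  rw [le_div_iff₀ (by positivity : (0:ℝ) < β ^ 2)] at h2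
  have key : β ^ 2 * t ^ 2 ≤ 2 * β * (a * t) + b ^ 2 := by
    nlinarith [hmin, h3, h4, hβ]
  rw [le_div_iff₀ hβ]
  nlinarith [key, mul_nonneg ha0 hb0, mul_nonneg (mul_nonneg hβ.le ht0) hb0,
    mul_nonneg (mul_nonneg hβ.le ht0) ha0, mul_nonneg ha0 ht0]
end
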